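/- Let k be a field, α a weight with α₁ ≥ ⋯ ≥ αₙ > 0, and f = (f₁,…,fₙ) a polynomial automorphism of kⁿ fixing the monomial valuation ν_{id,α} (i.e., ν_{id,α}(P∘f) = ν_{id,α}(P) for all P). Write the constant-free part of each fᵢ as ℓᵢ + Pᵢ with ℓᵢ linear and Pᵢ containing only monomials of total degree ≥ 2. Then each ℓᵢ satisfies −ν_{id,α}(ℓᵢ) = αᵢ, i.e., every variable xⱼ appearing in ℓᵢ has αⱼ ≤ αᵢ and some variable with αⱼ = αᵢ appears; and every monomial of Pᵢ has α-weighted degree ≤ αᵢ and involves only variables xⱼ with αⱼ < αᵢ. -/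

import Mathlib

open MvPolynomial
open scoped Classical

/-- The monomial valuation `ν_{id,α}`. -/
noncomputable def nuMon (n : ℕ) (k : Type*) [CommRing k] (α : Fin n → ℝ)
    (P : MvPolynomial (Fin n) k) : EReal :=
  if h : P = 0 then ⊤
  else (((P.support.inf' (by rwa [MvPolynomial.support_nonempty])
      fun I => -(∑ j, α j * (I j : ℝ))) : ℝ) : EReal)

section Aux

variable {n : ℕ} {k : Type*} [CommRing k]

lemma aux_constantCoeff_aeval (f' : Fin n → MvPolynomial (Fin n) k)
    (hc : ∀ t, constantCoeff (f' t) = 0) (P : MvPolynomial (Fin n) k) :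
    constantCoeff (aeval f' P) = constantCoeff P := by
  induction P using MvPolynomial.induction_on with
  | C a => simp [aeval_C]
  | add p q hp hq => simp only [map_add, hp, hq]
  | mul_X p s hp => simp only [map_mul, map_mul, aeval_X, hp, hc, mul_zero, constantCoeff_X]

lemma aux_coeff_single_one_mul (Q R : MvPolynomial (Fin n) k) (j : Fin n) :
    coeff (Finsupp.single j 1) (Q * R) =
      coeff 0 Q * coeff (Finsupp.single j 1) R +
        coeff (Finsupp.single j 1) Q * coeff 0 R := by
  rw [coeff_mul, Finsupp.antidiagonal_single, Finset.sum_map]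
  rw [show (Finset.HasAntidiagonal.antidiagonal (1 : ℕ)) = {(0, 1), (1, 0)} by decide]
  simp [Finsupp.single_zero]

/-- Chain rule for linear coefficients: if all `f' t` have zero constant term,
then the degree-one coefficients of `aeval f' P` are given by matrix product. -/
lemma aux_lin_coeff_aeval (f' : Fin n → MvPolynomial (Fin n) k)
    (hc : ∀ t, constantCoeff (f' t) = 0) (P : MvPolynomial (Fin n) k) (j : Fin n) :
    coeff (Finsupp.single j 1) (aeval f' P) =
      ∑ t, coeff (Finsupp.single t 1) P * coeff (Finsupp.single j 1) (f' t) := by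
  induction P using MvPolynomial.induction_on with
  | C a =>
      have h1 : (Finsupp.single j 1 : Fin n →₀ ℕ) ≠ 0 :=
        fun h => one_ne_zero (Finsupp.single_eq_zero.1 h)
      have h2 : ∀ t : Fin n, (Finsupp.single t 1 : Fin n →₀ ℕ) ≠ 0 :=
        fun t h => one_ne_zero (Finsupp.single_eq_zero.1 h)
      simp [aeval_C, coeff_C, (Ne.symm h1), fun t => Ne.symm (h2 t)]
  | add p q hp hq =>
      simp only [map_add, coeff_add, hp, hq, add_mul, Finset.sum_add_distrib]
  | mul_X p s hp =>
      rw [map_mul, aeval_X, aux_coeff_single_one_mul]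
      have hc0 : coeff 0 (f' s) = 0 := hc s
      have hcc : coeff 0 (aeval f' p) = coeff 0 p := by
        have := aux_constantCoeff_aeval f' hc p
        simpa [constantCoeff_eq] using this
      rw [hc0, hcc, mul_zero, add_zero]
      have hrhs : ∀ t : Fin n, coeff (Finsupp.single t 1) (p * X s) =
          if s = t then coeff 0 p else 0 := by
        intro t
        rw [aux_coeff_single_one_mul]
        rw [coeff_X', coeff_zero_X, mul_zero, add_zero]
        by_cases hst : s = t
        · subst hst; simp
        · rw [if_neg hst, if_neg]
          · ring
          · intro h
            exact hst (Finsupp.single_left_injective one_ne_zero h)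
      calc coeff 0 p * coeff (Finsupp.single j 1) (f' s)
          = ∑ t, (if s = t then coeff 0 p else 0) * coeff (Finsupp.single j 1) (f' t) := by
            rw [Finset.sum_eq_single s]
            · simp
            · intro b _ hb; rw [if_neg (Ne.symm hb), zero_mul]
            · intro h; exact absurd (Finset.mem_univ s) h
        _ = ∑ t, coeff (Finsupp.single t 1) (p * X s) * coeff (Finsupp.single j 1) (f' t) := by
            refine Finset.sum_congr rfl fun t _ => ?_
            rw [hrhs t]

end Aux

/-- if a polynomial automorphism `f = (f₁,…,fₙ)` of `kⁿ` fixes the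
monomial valuation `ν_{id,α}` with `α₁ ≥ ⋯ ≥ αₙ > 0`, then the linear part
`ℓᵢ` of each `fᵢ` satisfies `−ν_{id,α}(ℓᵢ) = αᵢ` (every variable `xⱼ` in `ℓᵢ`
has `αⱼ ≤ αᵢ`, and some variable with `αⱼ = αᵢ` appears), and every monomial
of total degree `≥ 2` of `fᵢ` has `α`-weighted degree `≤ αᵢ` and involves only
variables `xⱼ` with `αⱼ < αᵢ`. -/
theorem stabilizer_component_shape (n : ℕ) (k : Type*) [Field k]
    (α : Fin n → ℝ) (hmono : ∀ i j : Fin n, i ≤ j → α j ≤ α i)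
    (hpos : ∀ i, 0 < α i)
    (f g : Fin n → MvPolynomial (Fin n) k)
    (hfg : ∀ i, MvPolynomial.aeval g (f i) = MvPolynomial.X i)
    (hgf : ∀ i, MvPolynomial.aeval f (g i) = MvPolynomial.X i)
    (hfix : ∀ P, nuMon n k α (MvPolynomial.aeval f P) = nuMon n k α P) :
    ∀ i : Fin n,
      (∀ j, MvPolynomial.coeff (Finsupp.single j 1) (f i) ≠ 0 → α j ≤ α i) ∧
      (∃ j, MvPolynomial.coeff (Finsupp.single j 1) (f i) ≠ 0 ∧ α j = α i) ∧
      (∀ d ∈ (f i).support, 2 ≤ d.sum (fun _ e => e) →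
        (∑ j, (d j : ℝ) * α j ≤ α i) ∧ ∀ j, d j ≠ 0 → α j < α i) := by
  -- weighted degree of a single variable
  have hsum : ∀ i : Fin n, ∑ j, α j * ((Finsupp.single i 1 : Fin n →₀ ℕ) j : ℝ) = α i := by
    intro i
    rw [Finset.sum_eq_single i]
    · simp
    · intro b _ hb
      rw [Finsupp.single_eq_of_ne hb]
      simp
    · intro h; exact absurd (Finset.mem_univ i) h
  -- value of nuMon at X i
  have hnuX : ∀ i : Fin n, nuMon n k α (X i) = ((-(α i) : ℝ) : EReal) := by
    intro i
    have hne : (X i : MvPolynomial (Fin n) k) ≠ 0 := X_ne_zero i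
    rw [nuMon, dif_neg hne]
    norm_cast
    apply le_antisymm
    · have hmem : Finsupp.single i 1 ∈ (X i : MvPolynomial (Fin n) k).support := by
        rw [mem_support_iff, coeff_X]; simp
      have := Finset.inf'_le (fun I : Fin n →₀ ℕ => -(∑ j, α j * (I j : ℝ))) hmem
      simpa only [hsum i] using this
    · apply Finset.le_inf'
      intro m hm
      have : m = Finsupp.single i 1 := by
        have := support_X (R := k) (n := i)
        rw [this, Finset.mem_singleton] at hm
        exact hm
      subst this
      simp [hsum i]
  -- nuMon of f i
  have hfi : ∀ i, nuMon n k α (f i) = ((-(α i) : ℝ) : EReal) := by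
    intro i
    have := hfix (X i)
    rwa [aeval_X, hnuX] at this
  have hfne : ∀ i, f i ≠ 0 := by
    intro i h
    have h2 := hfi i
    rw [nuMon, dif_pos h] at h2
    exact (EReal.coe_ne_top _) h2.symm
  -- the key inequality: every monomial of f i has weighted degree ≤ α i
  have hkey : ∀ i, ∀ d ∈ (f i).support, ∑ j, α j * (d j : ℝ) ≤ α i := by
    intro i d hd
    have h2 := hfi i
    rw [nuMon, dif_neg (hfne i)] at h2
    have h2' : ((f i).support.inf' (MvPolynomial.support_nonempty.2 (hfne i))
        fun I => -(∑ j, α j * (I j : ℝ))) = -(α i) := by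
      exact_mod_cast h2
    have h3 : (-(α i) : ℝ) ≤ -(∑ j, α j * (d j : ℝ)) := by
      rw [← h2']
      exact Finset.inf'_le _ hd
    linarith
  -- part 1
  have part1 : ∀ i j, coeff (Finsupp.single j 1) (f i) ≠ 0 → α j ≤ α i := by
    intro i j hcoeff
    have hd : Finsupp.single j 1 ∈ (f i).support := mem_support_iff.2 hcoeff
    have := hkey i _ hd
    rwa [hsum j] at this
  -- part 2: existence of a linear term of the same weight, via invertibility
  have part2 : ∀ i, ∃ j, coeff (Finsupp.single j 1) (f i) ≠ 0 ∧ α j = α i := by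
    set c : Fin n → k := fun t => constantCoeff (f t) with hc_def
    set f' : Fin n → MvPolynomial (Fin n) k := fun t => f t - C (c t) with hf'_def
    have hc : ∀ t, constantCoeff (f' t) = 0 := by
      intro t; simp [hf'_def, hc_def]
    set g' : Fin n → MvPolynomial (Fin n) k :=
      fun i => aeval (fun t => X t + C (c t)) (g i) with hg'_def
    have hcomp : ∀ i, aeval f' (g' i) = X i := by
      intro i
      have h1 : aeval f' (g' i)
          = aeval (fun t => aeval f' (X t + C (c t))) (g i) := by
        rw [hg'_def]
        exact MvPolynomial.bind₁_bind₁ (fun t => X t + C (c t)) f' (g i)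
      rw [h1]
      have h2 : (fun t => aeval f' (X t + C (c t))) = f := by
        funext t
        rw [map_add, aeval_X, aeval_C]
        show f t - C (c t) + algebraMap k _ (c t) = f t
        rw [algebraMap_eq, sub_add_cancel]
      rw [h2, hgf i]
    set A : Matrix (Fin n) (Fin n) k :=
      fun t j => coeff (Finsupp.single j 1) (f t) with hA_def
    have hA' : ∀ t j, coeff (Finsupp.single j 1) (f' t) = A t j := by
      intro t j
      rw [hf'_def, hA_def]
      simp only [coeff_sub, coeff_C]
      rw [if_neg, sub_zero]
      exact fun h => one_ne_zero (Finsupp.single_eq_zero.1 h.symm)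
    set B : Matrix (Fin n) (Fin n) k :=
      fun i t => coeff (Finsupp.single t 1) (g' i) with hB_def
    have hBA : B * A = 1 := by
      ext i j
      have hthis := aux_lin_coeff_aeval f' hc (g' i) j
      rw [hcomp i] at hthis
      simp only [hA'] at hthis
      rw [Matrix.mul_apply, Matrix.one_apply, ← hthis, coeff_X']
      by_cases hij : i = j
      · subst hij; simp
      · rw [if_neg hij, if_neg]
        intro h
        exact hij (Finsupp.single_left_injective one_ne_zero h)
    have hinj : ∀ v : Fin n → k, A.mulVec v = 0 → v = 0 := by
      intro v hv
      have h1 : B.mulVec (A.mulVec v) = (B * A).mulVec v := Matrix.mulVec_mulVec v B A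
      rw [hv, hBA, Matrix.mulVec_zero, Matrix.one_mulVec] at h1
      exact h1.symm
    intro i
    by_contra hno
    push_neg at hno
    -- submatrix on indices of weight ≥ α i
    set M : Matrix {j : Fin n // α i ≤ α j} {j : Fin n // α i ≤ α j} k :=
      fun r j => A r.1 j.1 with hM_def
    have hrow : ∀ j : {j : Fin n // α i ≤ α j}, M ⟨i, le_refl _⟩ j = 0 := by
      intro j
      by_contra hMij
      have hAij : coeff (Finsupp.single j.1 1) (f i) ≠ 0 := hMij
      exact hno j.1 hAij (le_antisymm (part1 i j.1 hAij) j.2)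
    have hdet : M.det = 0 := Matrix.det_eq_zero_of_row_eq_zero _ hrow
    obtain ⟨v, hv0, hMv⟩ := (Matrix.exists_mulVec_eq_zero_iff).2 hdet
    set w : Fin n → k := fun j => if h : α i ≤ α j then v ⟨j, h⟩ else 0 with hw_def
    have hw_sub : ∀ j : {j : Fin n // α i ≤ α j}, w j.1 = v j := by
      intro j
      rw [hw_def]
      simp only [dif_pos j.2]
    have hw_out : ∀ j : Fin n, ¬ α i ≤ α j → w j = 0 := by
      intro j hj
      rw [hw_def]; simp only [dif_neg hj]
    have hAw : A.mulVec w = 0 := by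
      funext r
      show ∑ j, A r j * w j = 0
      have hstep : ∑ j, A r j * w j = ∑ j : {j : Fin n // α i ≤ α j}, A r j.1 * w j.1 := by
        rw [← Finset.sum_subtype (Finset.univ.filter (fun j : Fin n => α i ≤ α j))
          (fun x => by simp) (fun j => A r j * w j)]
        apply (Finset.sum_subset (Finset.filter_subset _ _) _).symm
        intro x _ hx
        rw [Finset.mem_filter] at hx
        rw [hw_out x (fun h => hx ⟨Finset.mem_univ x, h⟩), mul_zero]
      rw [hstep]
      by_cases hr : α i ≤ α r
      · have : ∑ j : {j : Fin n // α i ≤ α j}, A r j.1 * w j.1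
            = M.mulVec v ⟨r, hr⟩ := by
          rw [Matrix.mulVec]
          refine Finset.sum_congr rfl fun j _ => ?_
          rw [hw_sub j]
        rw [this, hMv]
        rfl
      · apply Finset.sum_eq_zero
        intro j _
        have : A r j.1 = 0 := by
          by_contra hne
          exact hr (le_trans j.2 (part1 r j.1 hne))
        rw [this, zero_mul]
    have hw0 : w = 0 := hinj w hAw
    obtain ⟨j0, hj0⟩ := Function.ne_iff.1 hv0
    have : v j0 = 0 := by
      rw [← hw_sub j0, hw0]; rfl
    exact hj0 this
  -- part 3
  intro i
  refine ⟨part1 i, part2 i, ?_⟩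
  intro d hd hdeg
  have hk := hkey i d hd
  have hdegsum : 2 ≤ ∑ t, d t := by
    rwa [Finsupp.sum_fintype d (fun _ e => e) (fun _ => rfl)] at hdeg
  constructor
  · calc ∑ j, (d j : ℝ) * α j = ∑ j, α j * (d j : ℝ) := by
          refine Finset.sum_congr rfl fun j _ => mul_comm _ _
      _ ≤ α i := hk
  · intro j hj
    have hdj1 : 1 ≤ d j := Nat.one_le_iff_ne_zero.2 hj
    have hnonneg : ∀ t : Fin n, 0 ≤ α t * (d t : ℝ) :=
      fun t => mul_nonneg (hpos t).le (Nat.cast_nonneg _)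
    have hsplit : ∑ t ∈ Finset.univ.erase j, α t * (d t : ℝ) + α j * (d j : ℝ)
        = ∑ t, α t * (d t : ℝ) :=
      Finset.sum_erase_add _ _ (Finset.mem_univ j)
    have hrest : (0:ℝ) ≤ ∑ t ∈ Finset.univ.erase j, α t * (d t : ℝ) :=
      Finset.sum_nonneg fun t _ => hnonneg t
    have hlt : α j < ∑ t, α t * (d t : ℝ) := by
      rcases Nat.lt_or_ge (d j) 2 with h2 | h2
      · -- d j = 1, so some other index contributes
        have hdj : d j = 1 := le_antisymm (Nat.lt_succ_iff.1 h2) hdj1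
        have hsum_erase : 1 ≤ ∑ t ∈ Finset.univ.erase j, d t := by
          have h5 := Finset.sum_erase_add Finset.univ d (Finset.mem_univ j)
          omega
        have hex : ∃ t ∈ Finset.univ.erase j, d t ≠ 0 := by
          by_contra hall
          push_neg at hall
          have : ∑ t ∈ Finset.univ.erase j, d t = 0 :=
            Finset.sum_eq_zero fun t ht => hall t ht
          omega
        obtain ⟨t0, ht0mem, ht0⟩ := hex
        have ht01 : (1:ℝ) ≤ (d t0 : ℝ) := by
          exact_mod_cast Nat.one_le_iff_ne_zero.2 ht0
        have hsingle : α t0 * (d t0 : ℝ) ≤ ∑ t ∈ Finset.univ.erase j, α t * (d t : ℝ) :=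
          Finset.single_le_sum (fun t _ => hnonneg t) ht0mem
        have ht0pos : 0 < α t0 := hpos t0
        have hdjr : α j * (d j : ℝ) = α j := by
          rw [show ((d j : ℝ)) = 1 by exact_mod_cast hdj, mul_one]
        have ht0le : α t0 ≤ α t0 * (d t0 : ℝ) := by
          nlinarith [ht0pos, ht01]
        linarith [hsplit, hsingle, ht0le, ht0pos, hdjr]
      · have h2' : (2:ℝ) ≤ (d j : ℝ) := by exact_mod_cast h2
        have hαj : 0 < α j := hpos j
        nlinarith [hsplit, hrest, h2', hαj]
    exact lt_of_lt_of_le hlt hk
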